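/- Let b, p, p0 ∈ (0,1) with p ≠ p0, let α ∈ (0,1], λ > 0, and let P : (0,1) → (0,1] satisfy lim_{s→1^-} (1 - P(s))/(1-s)^α = λ. Then p0·P(s)/(1 - (1-p0)·P(s)) = p·P(1-b+bs)/(1 - (1-p)·P(1-b+bs)) for all s ∈ (0,1) — i.e., a geometric(p0) sum of independent copies of M is distributed as a geometric(p) sum of i.i.d. Bernoulli(b)-thinnings of M — if and only if b^α = p/p0 and P(s) = 1/(1 + λ(1-s)^α) for all s ∈ (0,1). In particular the equation forces p < p0. -/

import Mathlib

open Real Set Filter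

/-- A geometric(p₀) sum of independent copies of `M` is distributed as a
geometric(p) sum of i.i.d. Bernoulli(b)-thinnings of `M`, i.e.
`p₀P(s)/(1-(1-p₀)P(s)) = pP(1-b+bs)/(1-(1-p)P(1-b+bs))` on `(0,1)`, iff
`b^α = p/p₀` and `M` is DML(λ,α). In particular the equation forces `p < p₀`. -/
theorem two_geometric_sums_iff_DML (b p p0 α lam : ℝ)
    (hb : b ∈ Set.Ioo (0 : ℝ) 1) (hp : p ∈ Set.Ioo (0 : ℝ) 1)
    (hp0 : p0 ∈ Set.Ioo (0 : ℝ) 1) (hne : p ≠ p0)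
    (hα : α ∈ Set.Ioc (0 : ℝ) 1) (hlam : 0 < lam)
    (P : ℝ → ℝ) (hP : ∀ s ∈ Set.Ioo (0 : ℝ) 1, P s ∈ Set.Ioc (0 : ℝ) 1)
    (hlim : Filter.Tendsto (fun s : ℝ => (1 - P s) / (1 - s) ^ α)
      (nhdsWithin 1 (Set.Iio 1)) (nhds lam)) :
    ((∀ s ∈ Set.Ioo (0 : ℝ) 1,
        p0 * P s / (1 - (1 - p0) * P s)
          = p * P (1 - b + b * s) / (1 - (1 - p) * P (1 - b + b * s))) ↔
      (b ^ α = p / p0 ∧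
        ∀ s ∈ Set.Ioo (0 : ℝ) 1, P s = 1 / (1 + lam * (1 - s) ^ α))) ∧
    ((∀ s ∈ Set.Ioo (0 : ℝ) 1,
        p0 * P s / (1 - (1 - p0) * P s)
          = p * P (1 - b + b * s) / (1 - (1 - p) * P (1 - b + b * s))) → p < p0) := by
  obtain ⟨hb0, hb1⟩ := hb
  obtain ⟨hp1, hp2⟩ := hp
  obtain ⟨hq1, hq2⟩ := hp0
  obtain ⟨ha0, ha1⟩ := hα
  have hbα0 : (0:ℝ) < b ^ α := Real.rpow_pos_of_pos hb0 α
  have hbα1 : b ^ α < 1 := Real.rpow_lt_one hb0.le hb1 ha0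
  have hT : ∀ s ∈ Set.Ioo (0:ℝ) 1, (1 - b + b * s) ∈ Set.Ioo (0:ℝ) 1 := by
    intro s hs
    constructor
    · nlinarith [hs.1, hs.2]
    · nlinarith [hs.1, hs.2]
  -- The key forward implication
  have key : (∀ s ∈ Set.Ioo (0:ℝ) 1, p0 * P s / (1 - (1 - p0) * P s)
        = p * P (1 - b + b * s) / (1 - (1 - p) * P (1 - b + b * s))) →
      (b ^ α = p / p0 ∧ ∀ s ∈ Set.Ioo (0:ℝ) 1, P s = 1 / (1 + lam * (1 - s) ^ α)) := by
    intro heq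
    -- Step 1: the functional equation for Q(s) = (1-P(s))/P(s)
    have stepQ : ∀ s ∈ Set.Ioo (0:ℝ) 1,
        (1 - P (1 - b + b*s)) / P (1 - b + b*s) = (p/p0) * ((1 - P s)/ P s) := by
      intro s hs
      have hts := hT s hs
      obtain ⟨hPs0, hPs1⟩ := hP s hs
      obtain ⟨hPt0, hPt1⟩ := hP _ hts
      have hd1 : 0 < 1 - (1 - p0) * P s := by nlinarith
      have hd2 : 0 < 1 - (1 - p) * P (1 - b + b*s) := by nlinarith
      have h := heq s hs
      rw [div_eq_div_iff hd1.ne' hd2.ne'] at h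
      have hrhs : p/p0 * ((1 - P s)/P s) = (p*(1 - P s))/(p0 * P s) :=
        div_mul_div_comm p p0 (1 - P s) (P s)
      rw [hrhs, div_eq_div_iff hPt0.ne' (by positivity : p0 * P s ≠ 0)]
      linear_combination h
    -- Step 2: for every s in (0,1), conclude
    have main : ∀ s ∈ Set.Ioo (0:ℝ) 1,
        b ^ α = p / p0 ∧ (1 - P s)/P s = lam * (1-s)^α := by
      intro s hs
      set x : ℝ := 1 - s with hxdef
      have hx0 : 0 < x := by rw [hxdef]; linarith [hs.2]
      have hx1 : x < 1 := by rw [hxdef]; linarith [hs.1]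
      have hsn_mem : ∀ n : ℕ, (1 - b^n * x) ∈ Set.Ioo (0:ℝ) 1 := by
        intro n
        have h1 : 0 < b^n := pow_pos hb0 n
        have h2 : b^n ≤ 1 := pow_le_one₀ hb0.le hb1.le
        constructor
        · nlinarith
        · nlinarith
      set Qs : ℝ := (1 - P s)/P s with hQsdef
      have hQn : ∀ n : ℕ, (1 - P (1 - b^n*x))/P (1 - b^n*x) = (p/p0)^n * Qs := by
        intro n
        induction n with
        | zero =>
          have h0 : 1 - b^0*x = s := by rw [hxdef]; ring
          rw [h0, pow_zero, one_mul]
        | succ n ih =>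
          have h1 : 1 - b^(n+1)*x = 1 - b + b*(1 - b^n*x) := by ring
          rw [h1, stepQ _ (hsn_mem n), ih, pow_succ]; ring
      -- the sequence tends to 1 from below
      have hbn0 : Tendsto (fun n : ℕ => b^n) atTop (nhds 0) :=
        tendsto_pow_atTop_nhds_zero_of_lt_one hb0.le hb1
      have hseq : Tendsto (fun n : ℕ => 1 - b^n * x) atTop (nhdsWithin 1 (Set.Iio 1)) := by
        rw [tendsto_nhdsWithin_iff]
        constructor
        · have : Tendsto (fun n : ℕ => b^n * x) atTop (nhds 0) := by
            simpa using hbn0.mul_const x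
          simpa using tendsto_const_nhds.sub this
        · filter_upwards with n
          have := pow_pos hb0 n
          simp only [Set.mem_Iio]
          nlinarith
      have hfn := hlim.comp hseq
      -- rewrite the composed function
      have hpowα : ∀ n : ℕ, (b^n * x)^α = (b^α)^n * x^α := by
        intro n
        rw [Real.mul_rpow (pow_nonneg hb0.le n) hx0.le, ← Real.rpow_natCast b n,
          ← Real.rpow_mul hb0.le, mul_comm (n:ℝ) α, Real.rpow_mul hb0.le,
          Real.rpow_natCast]
      have hPsn0 : ∀ n : ℕ, 0 < P (1 - b^n*x) := fun n => (hP _ (hsn_mem n)).1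
      have h1mP : ∀ n : ℕ, 1 - P (1 - b^n*x) = (p/p0)^n * Qs * P (1 - b^n*x) := by
        intro n
        have hh := hQn n
        rw [div_eq_iff (hPsn0 n).ne'] at hh
        exact hh
      have hfn' : Tendsto (fun n : ℕ =>
          ((p/p0)^n * Qs * P (1 - b^n*x)) / ((b^α)^n * x^α)) atTop (nhds lam) := by
        refine hfn.congr fun n => ?_
        simp only [Function.comp_apply]
        rw [show (1 : ℝ) - (1 - b^n*x) = b^n * x by ring, hpowα n, h1mP n]
      -- P (sn n) → 1
      have hden0 : Tendsto (fun n : ℕ => (b^α)^n * x^α) atTop (nhds 0) := by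
        simpa using (tendsto_pow_atTop_nhds_zero_of_lt_one hbα0.le hbα1).mul_const (x^α)
      have hP1 : Tendsto (fun n : ℕ => P (1 - b^n*x)) atTop (nhds 1) := by
        have h2 : Tendsto (fun n : ℕ => 1 - P (1 - b^n*x)) atTop (nhds 0) := by
          have hm := hfn'.mul hden0
          rw [mul_zero] at hm
          refine hm.congr fun n => ?_
          rw [h1mP n, div_mul_cancel₀]
          positivity
        have h3 : Tendsto (fun n : ℕ => (1:ℝ) - (1 - P (1 - b^n*x))) atTop
            (nhds (1 - 0)) := tendsto_const_nhds.sub h2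
        simpa using h3
      -- Qs ≠ 0
      obtain ⟨hPs0, hPs1⟩ := hP s hs
      have hQs_nonneg : 0 ≤ Qs := by
        apply div_nonneg _ hPs0.le
        linarith
      have hQs_pos : 0 < Qs := by
        rcases hQs_nonneg.lt_or_eq with h | h
        · exact h
        · exfalso
          have hz : Tendsto (fun _ : ℕ => (0:ℝ)) atTop (nhds lam) := by
            refine hfn'.congr fun n => ?_
            rw [← h]
            simp
          have hl0 : lam = 0 := tendsto_nhds_unique hz tendsto_const_nhds
          linarith
      set K : ℝ := Qs / x^α with hKdef
      have hxα0 : 0 < x^α := Real.rpow_pos_of_pos hx0 α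
      have hK0 : 0 < K := div_pos hQs_pos hxα0
      set r : ℝ := (p/p0) / b^α with hrdef
      have hr0 : 0 < r := by
        apply div_pos (div_pos hp1 hq1) hbα0
      have hrlim : Tendsto (fun n : ℕ => r^n) atTop (nhds (lam / K)) := by
        have hKP : Tendsto (fun n : ℕ => K * P (1 - b^n*x)) atTop (nhds (K * 1)) :=
          tendsto_const_nhds.mul hP1
        rw [mul_one] at hKP
        have := hfn'.div hKP (by simp [hK0.ne'])
        refine this.congr fun n => ?_
        have hPn := hPsn0 n
        simp only [Pi.div_apply]
        rw [hrdef, div_pow, hKdef]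
        field_simp
        have e1 : p0 ^ n * p0⁻¹ ^ n = 1 := by rw [← mul_pow, mul_inv_cancel₀ hq1.ne', one_pow]
        have e2 : (b ^ α) ^ n * (b ^ α)⁻¹ ^ n = 1 := by
          rw [← mul_pow, mul_inv_cancel₀ hbα0.ne', one_pow]
        linear_combination (-(p ^ n) * ((b ^ α) ^ n * (b ^ α)⁻¹ ^ n)) * e1 - p ^ n * e2
      have hLK : lam / K > 0 := div_pos hlam hK0
      have hr1 : r = 1 := by
        rcases lt_trichotomy r 1 with h | h | h
        · exfalso
          have h0 : Tendsto (fun n : ℕ => r^n) atTop (nhds 0) :=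
            tendsto_pow_atTop_nhds_zero_of_lt_one hr0.le h
          have := tendsto_nhds_unique hrlim h0
          linarith
        · exact h
        · exfalso
          exact not_tendsto_nhds_of_tendsto_atTop
            (tendsto_pow_atTop_atTop_of_one_lt h) _ hrlim
      have hbα : b ^ α = p / p0 := by
        have hpr : p/p0 = r * b^α := by rw [hrdef]; field_simp
        rw [hpr, hr1, one_mul]
      refine ⟨hbα, ?_⟩
      have hone : Tendsto (fun _ : ℕ => (1:ℝ)) atTop (nhds (lam / K)) := by
        refine hrlim.congr fun n => ?_
        rw [hr1, one_pow]
      have hLK1 : lam / K = 1 := tendsto_nhds_unique hone tendsto_const_nhds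
      have hlamK : lam = K := by
        field_simp at hLK1
        linarith
      show Qs = lam * x ^ α
      rw [hlamK, hKdef]
      field_simp
    have hbα : b ^ α = p / p0 := (main (1/2) (by norm_num)).1
    refine ⟨hbα, fun s hs => ?_⟩
    obtain ⟨hPs0, hPs1⟩ := hP s hs
    have h := (main s hs).2
    have hden : 0 < 1 + lam * (1-s)^α := by
      have : 0 < (1-s)^α := Real.rpow_pos_of_pos (by linarith [hs.2]) α
      nlinarith
    rw [eq_div_iff hden.ne']
    field_simp at h
    linarith
  constructor
  · constructor
    · exact key
    · -- backward direction
      rintro ⟨hbp, hform⟩ s hs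
      have hts := hT s hs
      have hx0 : (0:ℝ) < 1 - s := by linarith [hs.2]
      have hxα0 : 0 < (1-s)^α := Real.rpow_pos_of_pos hx0 α
      rw [hform s hs, hform _ hts]
      have h1 : 1 - (1 - b + b*s) = b * (1-s) := by ring
      rw [h1, Real.mul_rpow hb0.le hx0.le, hbp]
      set x : ℝ := (1-s)^α with hxdef
      have hd1 : 0 < 1 + lam * x := by nlinarith
      have hd2 : 0 < 1 + lam * (p/p0 * x) := by
        have : 0 < p/p0 := div_pos hp1 hq1
        nlinarith
      have hd3 : 0 < p0 + lam * x := by nlinarith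
      have hd4 : 0 < p0 + lam * p / p0 * x * p0 := by
        have : 0 < lam * p / p0 * x * p0 := by positivity
        linarith
      have hd5 : (0:ℝ) < p * p0 + p * lam * x := by positivity
      field_simp [hd5.ne']
      have hd6 : 0 < p0 + lam * (p * x) - (1 - p) * p0 := by
        have heq6 : p0 + lam * (p * x) - (1 - p) * p0 = p * p0 + p * lam * x := by ring
        rw [heq6]; exact hd5
      rw [div_eq_div_iff (by linarith) (by linarith [hd6])]
      ring
  · intro h
    have hbα : b ^ α = p / p0 := (key h).1
    have : p / p0 < 1 := by rw [← hbα]; exact hbα1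
    calc p = (p/p0) * p0 := by field_simp
    _ < 1 * p0 := by exact mul_lt_mul_of_pos_right this hq1
    _ = p0 := one_mul p0
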